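/- arXiv:2107.00490 — 4 statements merged into one kernel-verified Lean document; each statement's English description precedes it below -/
import Mathlib

section
/- For every positive integer k ≥ 2 and every natural number n, the number of binary strings of length n that contain no run of k consecutive zeros satisfies (2 − 1/2^(k−2))^n ≤ |R_k^n| ≤ 2·(2 − 1/2^k)^n. -/
def hasZeroRun (k : ℕ) {n : ℕ} (s : Fin n → Bool) : Prop :=
  ∃ i, ∃ _ : i + k ≤ n, ∀ j, ∀ hj : j < k, s ⟨i + j, by omega⟩ = false

open Classical in
noncomputable def RLLcard (k n : ℕ) : ℕ :=
  (Finset.univ.filter (fun s : Fin n → Bool => ¬ hasZeroRun k s)).card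

open Finset

open Classical in
noncomputable def RLLset (k n : ℕ) : Finset (Fin n → Bool) :=
  Finset.univ.filter (fun s => ¬ hasZeroRun k s)

lemma RLLcard_eq (k n : ℕ) : RLLcard k n = (RLLset k n).card := rfl

lemma mem_RLLset {k n : ℕ} {s : Fin n → Bool} :
    s ∈ RLLset k n ↔ ¬ hasZeroRun k s := by
  simp [RLLset]

lemma RLLcard_small {k n : ℕ} (h : n < k) : RLLcard k n = 2 ^ n := by
  classical
  rw [RLLcard_eq, RLLset]
  rw [Finset.filter_true_of_mem]
  · simp
  · intro s _ ⟨i, hi, _⟩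
    omega

lemma one_le_RLLcard {k : ℕ} (hk : 1 ≤ k) (n : ℕ) : 1 ≤ RLLcard k n := by
  rw [RLLcard_eq]
  rw [Nat.one_le_iff_ne_zero, ← Nat.pos_iff_ne_zero, Finset.card_pos]
  refine ⟨fun _ => true, ?_⟩
  rw [mem_RLLset]
  rintro ⟨i, hi, h⟩
  exact absurd (h 0 (by omega)) (by simp)

/-- Prepend `j` zeros and a one to a string of length `n - (j+1)`, giving length `n`. -/
def prep (j n : ℕ) (s : Fin (n - (j+1)) → Bool) : Fin n → Bool :=
  fun i => if i.val < j then false else if i.val = j then true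
    else if h : i.val - (j+1) < n - (j+1) then s ⟨i.val - (j+1), h⟩ else true

lemma prep_lt {j n : ℕ} (s : Fin (n - (j+1)) → Bool) (i : Fin n) (h : i.val < j) :
    prep j n s i = false := by simp [prep, h]

lemma prep_eq {j n : ℕ} (s : Fin (n - (j+1)) → Bool) (i : Fin n) (h : i.val = j) :
    prep j n s i = true := by simp [prep, h]

lemma prep_gt {j n : ℕ} (hj : j + 1 ≤ n) (s : Fin (n - (j+1)) → Bool) (i : Fin n)
    (h : j < i.val) :
    prep j n s i = s ⟨i.val - (j+1), by omega⟩ := by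
  have h1 : ¬ i.val < j := by omega
  have h2 : ¬ i.val = j := by omega
  have h3 : i.val - (j+1) < n - (j+1) := by omega
  simp [prep, h1, h2, h3]

lemma prep_injective {j n : ℕ} (hj : j + 1 ≤ n) : Function.Injective (prep j n) := by
  intro s t h
  funext x
  have hx := congrFun h ⟨x.val + (j+1), by omega⟩
  rw [prep_gt hj s _ (by simp; omega), prep_gt hj t _ (by simp; omega)] at hx
  simpa using hx

lemma noRun_prep {k j n : ℕ} (hjk : j < k) (hj : j + 1 ≤ n)
    {s : Fin (n - (j+1)) → Bool} (hs : ¬ hasZeroRun k s) :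
    ¬ hasZeroRun k (prep j n s) := by
  rintro ⟨i, hi, h⟩
  by_cases hij : i ≤ j
  · -- position j is inside the window, and prep at j is true
    have := h (j - i) (by omega)
    rw [prep_eq _ _ (by simp; omega)] at this
    exact absurd this (by simp)
  · -- window entirely to the right of j: gives a run in s
    refine hs ⟨i - (j+1), by omega, ?_⟩
    intro l hl
    have := h l hl
    rw [prep_gt hj s _ (by simp; omega)] at this
    convert this using 2
    ext
    simp
    omega

lemma prep_surj {k n : ℕ} (hk : 1 ≤ k) (hn : k ≤ n) {s : Fin n → Bool}
    (hs : ¬ hasZeroRun k s) :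
    ∃ j < k, ∃ t : Fin (n - (j+1)) → Bool, ¬ hasZeroRun k t ∧ prep j n t = s := by
  classical
  have hex : ∃ m : ℕ, ∃ hm : m < n, s ⟨m, hm⟩ = true := by
    by_contra hc
    push_neg at hc
    refine hs ⟨0, by omega, ?_⟩
    intro l hl
    have := hc l (by omega)
    simpa using Bool.eq_false_iff.mpr (by simpa using this)
  let j := Nat.find hex
  obtain ⟨hjn, hjt⟩ := Nat.find_spec hex
  have hjmin : ∀ m (hm : m < n), m < j → s ⟨m, hm⟩ = false := by
    intro m hm hmj
    have := Nat.find_min hex hmj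
    push_neg at this
    simpa using this hm
  have hjk : j < k := by
    by_contra hc
    push_neg at hc
    exact hs ⟨0, by omega, fun l hl => hjmin (0 + l) (by omega) (by omega)⟩
  refine ⟨j, hjk, fun i => s ⟨i.val + (j+1), by omega⟩, ?_, ?_⟩
  · rintro ⟨i, hi, h⟩
    have hin : i + (j+1) ≤ n - k := by omega
    refine hs ⟨i + (j+1), by omega, ?_⟩
    intro l hl
    have := h l hl
    convert this using 2
    ext
    simp
    omega
  · funext x
    rcases lt_trichotomy x.val j with h | h | h
    · rw [prep_lt _ _ h]
      exact (hjmin x.val x.isLt h).symm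
    · rw [prep_eq _ _ h]
      have : x = ⟨j, hjn⟩ := by ext; exact h
      rw [this, hjt]
    · rw [prep_gt (by omega) _ _ h]
      congr 1
      ext
      simp
      omega

lemma RLL_recurrence {k n : ℕ} (hk : 1 ≤ k) (hn : k ≤ n) :
    RLLcard k n = ∑ j ∈ Finset.range k, RLLcard k (n - (j+1)) := by
  classical
  have hset : RLLset k n =
      (Finset.range k).biUnion (fun j => (RLLset k (n - (j+1))).image (prep j n)) := by
    ext s
    simp only [mem_RLLset, Finset.mem_biUnion, Finset.mem_range, Finset.mem_image]
    constructor
    · intro hs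
      obtain ⟨j, hjk, t, ht, hpt⟩ := prep_surj hk hn hs
      exact ⟨j, hjk, t, ht, hpt⟩
    · rintro ⟨j, hjk, t, ht, rfl⟩
      exact noRun_prep hjk (by omega) ht
  rw [RLLcard_eq, hset, Finset.card_biUnion]
  · refine Finset.sum_congr rfl fun j hj => ?_
    rw [Finset.mem_range] at hj
    rw [Finset.card_image_of_injective _ (prep_injective (by omega)), RLLcard_eq]
  · have key : ∀ (a b : ℕ), a < b → b ≤ n → ∀ (t : Fin (n-(a+1)) → Bool)
        (u : Fin (n-(b+1)) → Bool), prep a n t ≠ prep b n u := by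
      intro a b hab hbn t u he
      have ha : a < n := by omega
      have h1 : prep a n t ⟨a, ha⟩ = true := prep_eq _ _ rfl
      have h2 : prep b n u ⟨a, ha⟩ = false := prep_lt _ _ hab
      rw [he, h2] at h1
      exact Bool.noConfusion h1
    intro a ha b hb hab
    simp only [Finset.coe_range, Set.mem_Iio, Finset.mem_coe, Finset.mem_range] at ha hb
    rw [Function.onFun, Finset.disjoint_left]
    rintro s hsa hsb
    simp only [Finset.mem_image] at hsa hsb
    obtain ⟨t, _, hts⟩ := hsa
    obtain ⟨u, _, hus⟩ := hsb
    rcases Nat.lt_or_ge a b with h | h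
    · exact key a b h (by omega) t u (hts.trans hus.symm)
    · exact key b a (by omega) (by omega) u t (hus.trans hts.symm)

lemma nat_ineq {k : ℕ} (hk : 3 ≤ k) : 4 * k ≤ 3 * 2 ^ (k - 1) := by
  induction k with
  | zero => omega
  | succ m ih =>
    rcases Nat.lt_or_ge m 3 with h | h
    · interval_cases m <;> simp_all <;> omega
    · have := ih (by omega)
      have h2 : m - 1 + 1 = m := by omega
      have h3 : (2:ℕ)^(m-1) ≥ 4 := by
        calc (2:ℕ)^(m-1) ≥ 2^2 := Nat.pow_le_pow_right (by norm_num) (by omega)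
          _ = 4 := by norm_num
      calc 4 * (m+1) ≤ 3 * 2^(m-1) + 4 := by omega
        _ ≤ 3 * 2^(m-1) + 3 * 2^(m-1) := by omega
        _ = 3 * 2^(m-1+1) := by ring
        _ = 3 * 2^(m+1-1) := by rw [h2]; congr 1

lemma key_lower {k : ℕ} (hk : 3 ≤ k) :
    (2:ℝ)^(k-2) ≤ ((2:ℝ) - 1/2^(k-2))^k := by
  set x : ℝ := 1/2^(k-1) with hx
  have hx0 : 0 < x := by positivity
  have hq : (2:ℝ) - 1/2^(k-2) = 2 * (1 - x) := by
    have h1 : k - 1 = (k-2) + 1 := by omega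
    rw [hx, h1, pow_succ]
    field_simp
  have hx1 : x ≤ 1 := by
    rw [hx, div_le_one (by positivity)]
    calc (1:ℝ) = 1^(k-1) := (one_pow _).symm
      _ ≤ 2^(k-1) := pow_le_pow_left₀ (by norm_num) (by norm_num) _
  have hbern : 1 - (k:ℝ) * x ≤ (1 - x)^k := by
    calc 1 - (k:ℝ) * x = 1 + k * (-x) := by ring
      _ ≤ (1 + -x)^k := one_add_mul_le_pow (by linarith) k
      _ = (1 - x)^k := by rw [← sub_eq_add_neg]
  have hkx : (k:ℝ) * x ≤ 3/4 := by
    rw [hx, mul_one_div, div_le_div_iff₀ (by positivity) (by norm_num)]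
    have h := nat_ineq hk
    have h' : (4:ℝ) * k ≤ 3 * 2^(k-1) := by exact_mod_cast h
    linarith
  have h2k : (2:ℝ)^k = 4 * 2^(k-2) := by
    have h1 : (2:ℝ)^k = 2^((k-2)+2) := by congr 1; omega
    rw [h1, pow_add]; ring
  calc (2:ℝ)^(k-2) = 2^k * (1/4) := by rw [h2k]; ring
    _ ≤ 2^k * (1 - k*x) := by
        have : (0:ℝ) ≤ 2^k := by positivity
        nlinarith
    _ ≤ 2^k * (1 - x)^k := by nlinarith [pow_pos (show (0:ℝ) < 2 by norm_num) k]
    _ = (2 * (1-x))^k := by rw [mul_pow]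
    _ = ((2:ℝ) - 1/2^(k-2))^k := by rw [hq]

lemma geo_lower {k : ℕ} (hk : 3 ≤ k) :
    ((2:ℝ) - 1/2^(k-2))^k ≤ ∑ j ∈ Finset.range k, ((2:ℝ) - 1/2^(k-2))^j := by
  set q : ℝ := 2 - 1/2^(k-2) with hqdef
  have hpk : (1:ℝ) ≤ 2^(k-2) := by
    calc (1:ℝ) = 1^(k-2) := (one_pow _).symm
      _ ≤ 2^(k-2) := pow_le_pow_left₀ (by norm_num) (by norm_num) _
  have hpk2 : (2:ℝ) ≤ 2^(k-2) := by
    calc (2:ℝ) = 2^1 := (pow_one _).symm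
      _ ≤ 2^(k-2) := pow_le_pow_right₀ (by norm_num) (by omega)
  have hq1 : 1 < q := by
    rw [hqdef]
    have : 1/2^(k-2) ≤ (1:ℝ)/2 := by
      apply div_le_div_of_nonneg_left (by norm_num) (by norm_num) hpk2
    linarith
  have hgeom := geom_sum_mul q k
  have hkey := key_lower hk
  have hq2 : (1/2^(k-2)) * q^k ≥ 1 := by
    calc (1/2^(k-2)) * q^k ≥ (1/2^(k-2)) * 2^(k-2) := by
          apply mul_le_mul_of_nonneg_left hkey (by positivity)
      _ = 1 := by field_simp
  have h2 : (q-1) * q^k ≤ q^k - 1 := by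
    have : (q-1) * q^k = q^k - (1/2^(k-2)) * q^k := by rw [hqdef]; ring
    rw [this]; linarith
  have h3 : (q-1) * q^k ≤ (q-1) * ∑ j ∈ Finset.range k, q^j := by
    calc (q-1) * q^k ≤ q^k - 1 := h2
      _ = (∑ j ∈ Finset.range k, q^j) * (q-1) := hgeom.symm
      _ = (q-1) * ∑ j ∈ Finset.range k, q^j := by ring
  exact le_of_mul_le_mul_left h3 (by linarith)

lemma lower_bound {k : ℕ} (hk : 2 ≤ k) (n : ℕ) :
    ((2:ℝ) - 1/2^(k-2))^n ≤ (RLLcard k n : ℝ) := by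
  rcases Nat.lt_or_ge k 3 with hk3 | hk3
  · -- k = 2
    have hk2 : k = 2 := by omega
    subst hk2
    norm_num
    exact_mod_cast one_le_RLLcard (by norm_num) n
  set q : ℝ := 2 - 1/2^(k-2) with hqdef
  have hq0 : 0 ≤ q := by
    have hpk : (1:ℝ) ≤ 2^(k-2) := by
      calc (1:ℝ) = 1^(k-2) := (one_pow _).symm
        _ ≤ 2^(k-2) := pow_le_pow_left₀ (by norm_num) (by norm_num) _
    have : 1/2^(k-2) ≤ (1:ℝ) := by
      rw [div_le_one (by positivity)]; exact hpk
    rw [hqdef]; linarith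
  have hq2 : q ≤ 2 := by
    have : (0:ℝ) < 1/2^(k-2) := by positivity
    rw [hqdef]; linarith
  induction n using Nat.strong_induction_on with
  | _ n ih =>
    rcases Nat.lt_or_ge n k with hn | hn
    · rw [RLLcard_small hn]
      push_cast
      exact pow_le_pow_left₀ hq0 hq2 n
    · rw [RLL_recurrence (by omega) hn]
      push_cast
      calc q^n = q^(n-k) * q^k := by rw [← pow_add]; congr 1; omega
        _ ≤ q^(n-k) * ∑ j ∈ Finset.range k, q^j :=
            mul_le_mul_of_nonneg_left (geo_lower hk3) (pow_nonneg hq0 _)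
        _ = ∑ j ∈ Finset.range k, q^(n-k+j) := by
            rw [Finset.mul_sum]
            exact Finset.sum_congr rfl fun j _ => (pow_add q (n-k) j).symm
        _ = ∑ j ∈ Finset.range k, q^(n-(j+1)) := by
            rw [← Finset.sum_range_reflect]
            refine Finset.sum_congr rfl fun j hj => ?_
            rw [Finset.mem_range] at hj
            congr 1
            omega
        _ ≤ ∑ j ∈ Finset.range k, (RLLcard k (n-(j+1)) : ℝ) := by
            refine Finset.sum_le_sum fun j hj => ?_
            rw [Finset.mem_range] at hj
            exact ih _ (by omega)

lemma key_upper {k : ℕ} (hk : 1 ≤ k) :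
    (2:ℝ)^(k-1) ≤ ((2:ℝ) - 1/2^k)^k := by
  set y : ℝ := 1/2^(k+1) with hy
  have hy0 : 0 < y := by positivity
  have hy1 : y ≤ 1 := by
    rw [hy, div_le_one (by positivity)]
    calc (1:ℝ) = 1^(k+1) := (one_pow _).symm
      _ ≤ 2^(k+1) := pow_le_pow_left₀ (by norm_num) (by norm_num) _
  have hr : (2:ℝ) - 1/2^k = 2 * (1 - y) := by
    rw [hy, pow_succ]
    field_simp
  have hbern : 1 - (k:ℝ) * y ≤ (1 - y)^k := by
    calc 1 - (k:ℝ) * y = 1 + k * (-y) := by ring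
      _ ≤ (1 + -y)^k := one_add_mul_le_pow (by linarith) k
      _ = (1 - y)^k := by rw [← sub_eq_add_neg]
  have hky : (k:ℝ) * y ≤ 1/2 := by
    rw [hy, mul_one_div, div_le_div_iff₀ (by positivity) (by norm_num)]
    have h := Nat.lt_two_pow_self (n := k)
    have h' : (k:ℝ) < 2^k := by exact_mod_cast h
    have h2 : (2:ℝ)^(k+1) = 2 * 2^k := by rw [pow_succ]; ring
    nlinarith
  have h2k : (2:ℝ)^k = 2 * 2^(k-1) := by
    have h1 : (2:ℝ)^k = 2^((k-1)+1) := by congr 1; omega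
    rw [h1, pow_succ]; ring
  calc (2:ℝ)^(k-1) = 2^k * (1/2) := by rw [h2k]; ring
    _ ≤ 2^k * (1 - k*y) := by
        have : (0:ℝ) ≤ 2^k := by positivity
        nlinarith
    _ ≤ 2^k * (1 - y)^k := by nlinarith [pow_pos (show (0:ℝ) < 2 by norm_num) k]
    _ = (2 * (1-y))^k := by rw [mul_pow]
    _ = ((2:ℝ) - 1/2^k)^k := by rw [hr]

lemma pow2_le {k n : ℕ} (hk : 1 ≤ k) (hn : n ≤ k) :
    (2:ℝ)^n ≤ 2 * ((2:ℝ) - 1/2^k)^n := by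
  set r : ℝ := 2 - 1/2^k with hrdef
  have hr0 : 0 ≤ r := by
    have h1 : 1/2^k ≤ (1:ℝ) := by
      rw [div_le_one (by positivity)]
      calc (1:ℝ) = 1^k := (one_pow _).symm
        _ ≤ 2^k := pow_le_pow_left₀ (by norm_num) (by norm_num) _
    rw [hrdef]; linarith
  have hr2 : r ≤ 2 := by
    have : (0:ℝ) < 1/2^k := by positivity
    rw [hrdef]; linarith
  have hpos : (0:ℝ) < 2^(k-n) := by positivity
  rw [← mul_le_mul_iff_left₀ hpos]
  calc (2:ℝ)^n * 2^(k-n) = 2^k := by rw [← pow_add]; congr 1; omega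
    _ = 2 * 2^(k-1) := by
        have h1 : (2:ℝ)^k = 2^((k-1)+1) := by congr 1; omega
        rw [h1, pow_succ]; ring
    _ ≤ 2 * r^k := by have := key_upper hk; linarith
    _ = 2 * (r^n * r^(k-n)) := by rw [← pow_add]; congr 2; omega
    _ ≤ 2 * (r^n * 2^(k-n)) := by
        have h1 : r^(k-n) ≤ 2^(k-n) := pow_le_pow_left₀ hr0 hr2 _
        have h2 : (0:ℝ) ≤ r^n := pow_nonneg hr0 _
        nlinarith
    _ = 2 * r^n * 2^(k-n) := by ring

lemma geo_upper {k : ℕ} (hk : 1 ≤ k) :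
    ∑ j ∈ Finset.range k, ((2:ℝ) - 1/2^k)^j ≤ ((2:ℝ) - 1/2^k)^k := by
  set r : ℝ := 2 - 1/2^k with hrdef
  have hpk : (1:ℝ) ≤ 2^k := by
    calc (1:ℝ) = 1^k := (one_pow _).symm
      _ ≤ 2^k := pow_le_pow_left₀ (by norm_num) (by norm_num) _
  have hpk2 : (2:ℝ) ≤ 2^k := by
    calc (2:ℝ) = 2^1 := (pow_one _).symm
      _ ≤ 2^k := pow_le_pow_right₀ (by norm_num) hk
  have hr1 : 1 < r := by
    have : 1/2^k ≤ (1:ℝ)/2 := by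
      apply div_le_div_of_nonneg_left (by norm_num) (by norm_num) hpk2
    rw [hrdef]; linarith
  have hr2 : r ≤ 2 := by
    have : (0:ℝ) < 1/2^k := by positivity
    rw [hrdef]; linarith
  have hrk : r^k ≤ 2^k := pow_le_pow_left₀ (by linarith) hr2 _
  have hq2 : (1/2^k) * r^k ≤ 1 := by
    rw [div_mul_eq_mul_div, one_mul, div_le_one (by positivity)]
    exact hrk
  have hgeom := geom_sum_mul r k
  have h2 : r^k - 1 ≤ (r-1) * r^k := by
    have : (r-1) * r^k = r^k - (1/2^k) * r^k := by rw [hrdef]; ring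
    rw [this]; linarith
  have h3 : (r-1) * ∑ j ∈ Finset.range k, r^j ≤ (r-1) * r^k := by
    calc (r-1) * ∑ j ∈ Finset.range k, r^j
        = (∑ j ∈ Finset.range k, r^j) * (r-1) := by ring
      _ = r^k - 1 := hgeom
      _ ≤ (r-1) * r^k := h2
  exact le_of_mul_le_mul_left h3 (by linarith)

lemma upper_bound {k : ℕ} (hk : 2 ≤ k) (n : ℕ) :
    (RLLcard k n : ℝ) ≤ 2 * ((2:ℝ) - 1/2^k)^n := by
  set r : ℝ := 2 - 1/2^k with hrdef
  have hr0 : 0 ≤ r := by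
    have h1 : 1/2^k ≤ (1:ℝ) := by
      rw [div_le_one (by positivity)]
      calc (1:ℝ) = 1^k := (one_pow _).symm
        _ ≤ 2^k := pow_le_pow_left₀ (by norm_num) (by norm_num) _
    rw [hrdef]; linarith
  induction n using Nat.strong_induction_on with
  | _ n ih =>
    rcases Nat.lt_or_ge n k with hn | hn
    · rw [RLLcard_small hn]
      push_cast
      exact pow2_le (by omega) (by omega)
    · rw [RLL_recurrence (by omega) hn]
      push_cast
      calc ∑ j ∈ Finset.range k, (RLLcard k (n-(j+1)) : ℝ)
          ≤ ∑ j ∈ Finset.range k, 2 * r^(n-(j+1)) := by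
            refine Finset.sum_le_sum fun j hj => ?_
            rw [Finset.mem_range] at hj
            exact ih _ (by omega)
        _ = 2 * ∑ j ∈ Finset.range k, r^(n-(j+1)) := by rw [Finset.mul_sum]
        _ = 2 * ∑ j ∈ Finset.range k, r^(n-k+j) := by
            congr 1
            rw [← Finset.sum_range_reflect]
            refine Finset.sum_congr rfl fun j hj => ?_
            rw [Finset.mem_range] at hj
            congr 1
            omega
        _ = 2 * (r^(n-k) * ∑ j ∈ Finset.range k, r^j) := by
            congr 1
            rw [Finset.mul_sum]
            exact Finset.sum_congr rfl fun j _ => (pow_add r (n-k) j)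
        _ ≤ 2 * (r^(n-k) * r^k) := by
            have h1 := geo_upper (show 1 ≤ k by omega)
            have h2 : (0:ℝ) ≤ r^(n-k) := pow_nonneg hr0 _
            nlinarith
        _ = 2 * r^n := by rw [← pow_add]; congr 2; omega

theorem stmt_1 (k : ℕ) (hk : 2 ≤ k) (n : ℕ) :
    (2 - 1/2^(k-2) : ℝ)^n ≤ (RLLcard k n : ℝ) ∧
    (RLLcard k n : ℝ) ≤ 2 * (2 - 1/2^k : ℝ)^n :=
  ⟨lower_bound hk n, upper_bound hk n⟩
end

section
/- Define S_δ(ℓ,m) = ∑_{t=0}^{ℓ} C(ℓ,t)·min(1, m·δ^t·(1−δ)^{ℓ−t}) for δ ∈ (0,1/2) and positive integers ℓ, m. Under the setup of the previous lemma, (1/2)·S_δ(ℓ,m)/2^ℓ ≤ Pr(w ∈ {r_1,…,r_m}) ≤ S_δ(ℓ,m)/2^ℓ for every w ∈ {0,1}^ℓ. -/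
open Finset

noncomputable def flipProb (δ : ℝ) {n : ℕ} (r x : Fin n → Bool) : ℝ :=
  δ ^ (hammingDist r x) * (1 - δ) ^ (n - hammingDist r x)

noncomputable def Sdelta (δ : ℝ) (ℓ m : ℕ) : ℝ :=
  ∑ t ∈ Finset.range (ℓ + 1),
    (ℓ.choose t : ℝ) * min 1 ((m : ℝ) * δ^t * (1 - δ)^(ℓ - t))

lemma flipProb_eq_prod (δ : ℝ) {n : ℕ} (r x : Fin n → Bool) :
    flipProb δ r x = ∏ i, (if r i = x i then (1 - δ) else δ) := by
  classical
  have h := Finset.card_filter_add_card_filter_not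
    (s := (univ : Finset (Fin n))) (p := fun i => r i = x i)
  simp only [card_univ, Fintype.card_fin] at h
  rw [Finset.prod_ite, Finset.prod_const, Finset.prod_const, flipProb, hammingDist]
  have hd : #(Finset.filter (fun i => r i ≠ x i) univ)
      = #(Finset.filter (fun i => ¬ r i = x i) univ) := rfl
  have hn : n - #(Finset.filter (fun i => r i ≠ x i) univ)
      = #(Finset.filter (fun i => r i = x i) univ) := by
    rw [hd]; omega
  rw [show ({i | r i ≠ x i} : Finset (Fin n))
    = Finset.filter (fun i => r i ≠ x i) univ from rfl, hn, hd, mul_comm]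

lemma sum_flipProb (δ : ℝ) {n : ℕ} (r : Fin n → Bool) :
    ∑ x : Fin n → Bool, flipProb δ r x = 1 := by
  classical
  simp only [flipProb_eq_prod]
  rw [← Fintype.prod_sum (fun i (b : Bool) => if r i = b then (1 - δ) else δ)]
  have h : ∀ i, (∑ b : Bool, (if r i = b then (1 - δ) else δ)) = 1 := by
    intro i
    rw [Fintype.sum_bool]
    cases hri : r i <;> simp
  simp only [h]
  exact Finset.prod_const_one

lemma flipProb_nonneg {δ : ℝ} (hδ0 : 0 < δ) (hδ : δ < 1/2) {n : ℕ}
    (r x : Fin n → Bool) : 0 ≤ flipProb δ r x := by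
  have h1 : (0:ℝ) ≤ 1 - δ := by linarith
  exact mul_nonneg (pow_nonneg hδ0.le _) (pow_nonneg h1 _)

lemma flipProb_le_one {δ : ℝ} (hδ0 : 0 < δ) (hδ : δ < 1/2) {n : ℕ}
    (r x : Fin n → Bool) : flipProb δ r x ≤ 1 := by
  have h1 : (0:ℝ) ≤ 1 - δ := by linarith
  have h2 : δ ^ hammingDist r x ≤ 1 := pow_le_one₀ hδ0.le (by linarith)
  have h3 : (1-δ) ^ (n - hammingDist r x) ≤ 1 := pow_le_one₀ h1 (by linarith)
  exact mul_le_one₀ h2 (pow_nonneg h1 _) h3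

lemma inner_sum_eq (δ : ℝ) {ℓ : ℕ} (m : ℕ) (r w : Fin ℓ → Bool) :
    (∑ rs : Fin m → (Fin ℓ → Bool),
        (∏ i, flipProb δ r (rs i)) * (if ∃ i, rs i = w then 1 else 0))
      = 1 - (1 - flipProb δ r w)^m := by
  classical
  have key : ∀ rs : Fin m → (Fin ℓ → Bool),
      (if ∃ i, rs i = w then (1:ℝ) else 0)
        = 1 - ∏ i, (if rs i = w then (0:ℝ) else 1) := by
    intro rs
    by_cases h : ∃ i, rs i = w
    · obtain ⟨i, hi⟩ := h
      rw [if_pos ⟨i, hi⟩, Finset.prod_eq_zero (Finset.mem_univ i) (by simp [hi])]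
      ring
    · rw [if_neg h]
      push_neg at h
      rw [Finset.prod_congr rfl (fun i _ => if_neg (h i)), Finset.prod_const_one]
      ring
  simp only [key, mul_sub, mul_one, Finset.sum_sub_distrib]
  have h1 : (∑ rs : Fin m → (Fin ℓ → Bool), ∏ i, flipProb δ r (rs i)) = 1 := by
    rw [← Fintype.prod_sum (fun (_ : Fin m) (x : Fin ℓ → Bool) => flipProb δ r x)]
    simp only [sum_flipProb δ r]
    exact Finset.prod_const_one
  have h2 : (∑ rs : Fin m → (Fin ℓ → Bool),
      (∏ i, flipProb δ r (rs i)) * ∏ i, (if rs i = w then (0:ℝ) else 1))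
      = (1 - flipProb δ r w)^m := by
    have hfac : (∑ x : Fin ℓ → Bool, flipProb δ r x * (if x = w then (0:ℝ) else 1))
        = 1 - flipProb δ r w := by
      have : ∀ x : Fin ℓ → Bool, flipProb δ r x * (if x = w then (0:ℝ) else 1)
          = flipProb δ r x - (if x = w then flipProb δ r x else 0) := by
        intro x; split <;> simp
      simp only [this, Finset.sum_sub_distrib, sum_flipProb δ r]
      rw [Finset.sum_ite_eq' univ w (fun x => flipProb δ r x)]
      simp
    calc (∑ rs : Fin m → (Fin ℓ → Bool),
        (∏ i, flipProb δ r (rs i)) * ∏ i, (if rs i = w then (0:ℝ) else 1))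
        = ∑ rs : Fin m → (Fin ℓ → Bool),
            ∏ i, (flipProb δ r (rs i) * (if rs i = w then (0:ℝ) else 1)) := by
          refine Finset.sum_congr rfl fun rs _ => ?_
          rw [Finset.prod_mul_distrib]
      _ = ∏ _i : Fin m, (∑ x : Fin ℓ → Bool,
            flipProb δ r x * (if x = w then (0:ℝ) else 1)) :=
          (Fintype.prod_sum (fun (_ : Fin m) (x : Fin ℓ → Bool) =>
            flipProb δ r x * (if x = w then (0:ℝ) else 1))).symm
      _ = (1 - flipProb δ r w)^m := by
          rw [Finset.prod_congr rfl (fun i _ => hfac), Finset.prod_const,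
            card_univ, Fintype.card_fin]
  rw [h1, h2]

lemma sum_fun_hamming {ℓ : ℕ} (w : Fin ℓ → Bool) (g : ℕ → ℝ) :
    (∑ r : Fin ℓ → Bool, g (hammingDist r w))
      = ∑ t ∈ Finset.range (ℓ+1), (ℓ.choose t : ℝ) * g t := by
  classical
  have e1 : (∑ s : Fin ℓ → Bool, g (#(Finset.filter (fun i => s i = true) univ)))
      = ∑ r : Fin ℓ → Bool, g (hammingDist r w) := by
    refine Fintype.sum_equiv
      ⟨fun s i => xor (s i) (w i), fun s i => xor (s i) (w i),
        fun s => by funext i; simp [Bool.xor_assoc],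
        fun s => by funext i; simp [Bool.xor_assoc]⟩ _ _ fun s => ?_
    congr 1
    rw [hammingDist]
    congr 1
    refine Finset.filter_congr fun i _ => ?_
    show s i = true ↔ ¬ xor (s i) (w i) = w i
    cases s i <;> cases w i <;> simp
  rw [← e1]
  have e2 : (∑ s : Fin ℓ → Bool, g (#(Finset.filter (fun i => s i = true) univ)))
      = ∑ A : Finset (Fin ℓ), g (#A) := by
    refine Fintype.sum_equiv
      ⟨fun s => Finset.filter (fun i => s i = true) univ,
        fun A i => decide (i ∈ A),
        fun s => by funext i; simp,
        fun A => by ext i; simp⟩ _ _ fun s => rfl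
  rw [e2, ← Finset.powerset_univ, Finset.sum_powerset_apply_card g]
  simp only [card_univ, Fintype.card_fin, nsmul_eq_mul]

lemma pointwise_bounds (p : ℝ) (hp0 : 0 ≤ p) (hp1 : p ≤ 1) (m : ℕ) :
    (1/2) * min 1 ((m:ℝ) * p) ≤ 1 - (1-p)^m ∧
      1 - (1-p)^m ≤ min 1 ((m:ℝ) * p) := by
  have hq0 : (0:ℝ) ≤ (1-p)^m := pow_nonneg (by linarith) m
  have hq1 : (1-p)^m ≤ 1 := pow_le_one₀ (by linarith) (by linarith)
  have hb : (1 : ℝ) + m * p ≤ (1+p)^m := by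
    have := one_add_mul_le_pow (a := p) (by linarith) m
    linarith
  have hmp0 : (0:ℝ) ≤ (m:ℝ) * p := mul_nonneg (Nat.cast_nonneg m) hp0
  have hkey : (1-p)^m * (1 + (m:ℝ) * p) ≤ 1 := by
    calc (1-p)^m * (1 + (m:ℝ)*p) ≤ (1-p)^m * (1+p)^m :=
          mul_le_mul_of_nonneg_left hb hq0
      _ = ((1-p)*(1+p))^m := (mul_pow _ _ _).symm
      _ ≤ 1 := pow_le_one₀ (by nlinarith) (by nlinarith)
  have hber : 1 - (m:ℝ) * p ≤ (1-p)^m := by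
    have := one_add_mul_le_pow (a := -p) (by linarith) m
    have h2 : (1:ℝ) + m * (-p) = 1 - m * p := by ring
    have h3 : (1:ℝ) + (-p) = 1 - p := by ring
    rw [h2, h3] at this
    exact this
  constructor
  · rcases le_total ((m:ℝ)*p) 1 with h | h
    · rw [min_eq_right h]
      nlinarith [mul_nonneg (sub_nonneg.2 h) (sub_nonneg.2 hq1)]
    · rw [min_eq_left h]
      nlinarith [mul_le_mul_of_nonneg_left h hq0]
  · rcases le_total ((m:ℝ)*p) 1 with h | h
    · rw [min_eq_right h]; linarith
    · rw [min_eq_left h]; linarith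

theorem stmt_5 (δ : ℝ) (hδ0 : 0 < δ) (hδ : δ < 1/2) (ℓ m : ℕ) (hm : 0 < m)
    (w : Fin ℓ → Bool) :
    (1/2) * (Sdelta δ ℓ m / 2^ℓ) ≤
      (∑ r : Fin ℓ → Bool, (1/2^ℓ : ℝ) *
        ∑ rs : Fin m → (Fin ℓ → Bool),
          (∏ i, flipProb δ r (rs i)) * (if ∃ i, rs i = w then 1 else 0)) ∧
    (∑ r : Fin ℓ → Bool, (1/2^ℓ : ℝ) *
        ∑ rs : Fin m → (Fin ℓ → Bool),
          (∏ i, flipProb δ r (rs i)) * (if ∃ i, rs i = w then 1 else 0))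
      ≤ Sdelta δ ℓ m / 2^ℓ := by
  have hsum_eq : (∑ r : Fin ℓ → Bool, (1/2^ℓ : ℝ) *
        ∑ rs : Fin m → (Fin ℓ → Bool),
          (∏ i, flipProb δ r (rs i)) * (if ∃ i, rs i = w then 1 else 0))
      = ∑ r : Fin ℓ → Bool, (1/2^ℓ : ℝ) * (1 - (1 - flipProb δ r w)^m) := by
    refine Finset.sum_congr rfl fun r _ => ?_
    rw [inner_sum_eq]
  have hS : Sdelta δ ℓ m = ∑ r : Fin ℓ → Bool, min 1 ((m:ℝ) * flipProb δ r w) := by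
    rw [Sdelta, ← sum_fun_hamming w (fun t => min 1 ((m:ℝ) * δ^t * (1-δ)^(ℓ-t)))]
    refine Finset.sum_congr rfl fun r _ => ?_
    rw [flipProb, mul_assoc]
  have hpos : (0:ℝ) < 2^ℓ := by positivity
  have hinv : (0:ℝ) ≤ 1/2^ℓ := by positivity
  have hpt := fun r : Fin ℓ → Bool => pointwise_bounds (flipProb δ r w)
    (flipProb_nonneg hδ0 hδ r w) (flipProb_le_one hδ0 hδ r w) m
  constructor
  · rw [hsum_eq]
    have heq : (1/2) * (Sdelta δ ℓ m / 2^ℓ)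
        = ∑ r : Fin ℓ → Bool, (1/2^ℓ : ℝ) * ((1/2) * min 1 ((m:ℝ) * flipProb δ r w)) := by
      rw [hS, Finset.sum_div, Finset.mul_sum]
      refine Finset.sum_congr rfl fun r _ => ?_
      ring
    rw [heq]
    refine Finset.sum_le_sum fun r _ => ?_
    exact mul_le_mul_of_nonneg_left (hpt r).1 hinv
  · rw [hsum_eq]
    have heq : Sdelta δ ℓ m / 2^ℓ
        = ∑ r : Fin ℓ → Bool, (1/2^ℓ : ℝ) * min 1 ((m:ℝ) * flipProb δ r w) := by
      rw [hS, Finset.sum_div]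
      refine Finset.sum_congr rfl fun r _ => ?_
      ring
    rw [heq]
    refine Finset.sum_le_sum fun r _ => ?_
    exact mul_le_mul_of_nonneg_left (hpt r).2 hinv
end

section
/- If ℓ ≤ (log₂ m)/H(1/2,δ), where H(1/2,δ) = (1/2)log₂(1/δ) + (1/2)log₂(1/(1−δ)), then S_δ(ℓ,m) ≥ 2^{ℓ−1}. -/
lemma aux_sq (m d e : ℝ) (t k : ℕ) :
    (m * d^t * e^(t+k))^2 = m^2 * ((d*e)^t)^2 * ((e^2)^k) := by ring

lemma aux_pow (a : ℝ) (t k : ℕ) : a^(2*t+k) = (a^t)^2 * a^k := by ring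

lemma half_sum_choose (ℓ : ℕ) (hℓ : 0 < ℓ) :
    2 ^ (ℓ - 1) ≤ ∑ t ∈ Finset.range (ℓ / 2 + 1), ℓ.choose t := by
  obtain ⟨n, rfl | rfl⟩ := Nat.even_or_odd' ℓ
  · -- ℓ = 2n, n ≥ 1
    have hn : 0 < n := by omega
    have hhalf : 2 * n / 2 = n := by omega
    rw [hhalf]
    have htot : (∑ i ∈ Finset.range (2 * n + 1), (2 * n).choose i) = 2 ^ (2 * n) :=
      Nat.sum_range_choose (2 * n)
    have hsplit : (∑ i ∈ Finset.range (n + 1), (2 * n).choose i) +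
        (∑ i ∈ Finset.Ico (n + 1) (2 * n + 1), (2 * n).choose i) =
        ∑ i ∈ Finset.range (2 * n + 1), (2 * n).choose i := by
      rw [Finset.range_eq_Ico, Finset.range_eq_Ico]
      exact Finset.sum_Ico_consecutive (fun i => (2 * n).choose i) (by omega : 0 ≤ n + 1) (by omega : n + 1 ≤ 2 * n + 1)
    have hmirror : (∑ i ∈ Finset.Ico (n + 1) (2 * n + 1), (2 * n).choose i) ≤
        ∑ i ∈ Finset.range (n + 1), (2 * n).choose i := by
      have h1 : (∑ i ∈ Finset.Ico (n + 1) (2 * n + 1), (2 * n).choose i) =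
          ∑ j ∈ Finset.range n, (2 * n).choose (n + 1 + j) := by
        rw [Finset.sum_Ico_eq_sum_range, show 2*n+1-(n+1) = n from by omega]
      have h2 : ∀ j ∈ Finset.range n, (2 * n).choose (n + 1 + j) =
          (2 * n).choose (n - 1 - j) := by
        intro j hj
        simp only [Finset.mem_range] at hj
        have : (2 * n).choose (2 * n - (n + 1 + j)) = (2 * n).choose (n + 1 + j) :=
          Nat.choose_symm (by omega)
        have he : 2 * n - (n + 1 + j) = n - 1 - j := by omega
        rw [he] at this
        exact this.symm
      rw [h1, Finset.sum_congr rfl h2, Finset.sum_range_reflect (fun j => (2 * n).choose j) n]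
      exact Finset.sum_le_sum_of_subset (Finset.range_subset_range.2 (by omega))
    have : 2 * 2 ^ (2 * n - 1) ≤ 2 * ∑ i ∈ Finset.range (n + 1), (2 * n).choose i := by
      have : 2 * 2 ^ (2 * n - 1) = 2 ^ (2 * n) := by
        rw [← pow_succ']
        congr 1
        omega
      omega
    omega
  · -- ℓ = 2n+1
    have hhalf : (2 * n + 1) / 2 = n := by omega
    rw [hhalf, Nat.sum_range_choose_halfway n]
    have : 2 ^ (2 * n + 1 - 1) = 4 ^ n := by
      rw [show 2 * n + 1 - 1 = 2 * n from rfl, pow_mul]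
      norm_num
    omega

theorem stmt_8 (δ : ℝ) (hδ0 : 0 < δ) (hδ : δ < 1/2) (ℓ m : ℕ) (hℓ : 0 < ℓ) (hm : 0 < m)
    (h : (ℓ : ℝ) ≤ Real.logb 2 m /
      ((1/2) * Real.logb 2 (1/δ) + (1/2) * Real.logb 2 (1/(1-δ)))) :
    (2 : ℝ)^(ℓ - 1) ≤ Sdelta δ ℓ m := by
  have hδ1 : δ < 1 := by linarith
  have h1δ : 0 < 1 - δ := by linarith
  have ha : 0 < δ * (1 - δ) := mul_pos hδ0 h1δ
  -- positivity of the entropy denominator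
  have hl1 : 0 < Real.logb 2 (1/δ) :=
    Real.logb_pos (by norm_num) (by rw [lt_div_iff₀ hδ0]; linarith)
  have hl2 : 0 < Real.logb 2 (1/(1-δ)) :=
    Real.logb_pos (by norm_num) (by rw [lt_div_iff₀ h1δ]; linarith)
  have hH : 0 < (1/2) * Real.logb 2 (1/δ) + (1/2) * Real.logb 2 (1/(1-δ)) := by linarith
  have hmul : (ℓ : ℝ) * ((1/2) * Real.logb 2 (1/δ) + (1/2) * Real.logb 2 (1/(1-δ)))
      ≤ Real.logb 2 m := (le_div_iff₀ hH).mp h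
  -- key1 : 1 ≤ m^2 * (δ(1-δ))^ℓ
  have key1 : (1 : ℝ) ≤ (m : ℝ)^2 * (δ * (1-δ))^ℓ := by
    have hmpos : (0 : ℝ) < m := by exact_mod_cast hm
    have hXpos : (0 : ℝ) < (m : ℝ)^2 * (δ * (1-δ))^ℓ :=
      mul_pos (by positivity) (pow_pos ha ℓ)
    rw [← Real.logb_nonneg_iff (by norm_num : (1:ℝ) < 2) hXpos]
    rw [Real.logb_mul (by positivity) (by positivity), Real.logb_pow, Real.logb_pow,
      Real.logb_mul (ne_of_gt hδ0) (ne_of_gt h1δ)]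
    have e1 : Real.logb 2 (1/δ) = -Real.logb 2 δ := by
      rw [one_div, Real.logb_inv]
    have e2 : Real.logb 2 (1/(1-δ)) = -Real.logb 2 (1-δ) := by
      rw [one_div, Real.logb_inv]
    rw [e1, e2] at hmul
    push_cast
    nlinarith [hmul]
  -- key2 : terms with 2t ≤ ℓ have min = 1
  have key2 : ∀ t : ℕ, 2 * t ≤ ℓ → (1 : ℝ) ≤ (m : ℝ) * δ^t * (1-δ)^(ℓ - t) := by
    intro t ht
    set k := ℓ - 2 * t with hk
    have hℓt : ℓ - t = t + k := by omega
    have hℓeq : ℓ = 2 * t + k := by omega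
    set x := (m : ℝ) * δ^t * (1-δ)^(ℓ - t) with hx
    have hxnn : 0 ≤ x := by positivity
    have hsq : x ^ 2 = (m : ℝ)^2 * ((δ * (1-δ))^t)^2 * ((1-δ)^2)^k := by
      rw [hx, hℓt]
      exact aux_sq (m : ℝ) δ (1-δ) t k
    have hA : (δ * (1-δ))^ℓ = ((δ * (1-δ))^t)^2 * (δ * (1-δ))^k := by
      rw [hℓeq]; exact aux_pow _ t k
    have hbase : δ * (1-δ) ≤ (1-δ)^2 := by nlinarith
    have hpow : (δ * (1-δ))^k ≤ ((1-δ)^2)^k := pow_le_pow_left₀ (le_of_lt ha) hbase k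
    have hsq2 : (m : ℝ)^2 * (δ * (1-δ))^ℓ ≤ x ^ 2 := by
      rw [hsq, hA]
      have hnn : (0:ℝ) ≤ (m : ℝ)^2 * ((δ * (1-δ))^t)^2 := by positivity
      calc (m : ℝ)^2 * (((δ * (1-δ))^t)^2 * (δ * (1-δ))^k)
          = (m : ℝ)^2 * ((δ * (1-δ))^t)^2 * (δ * (1-δ))^k := by ring
        _ ≤ (m : ℝ)^2 * ((δ * (1-δ))^t)^2 * ((1-δ)^2)^k :=
            mul_le_mul_of_nonneg_left hpow hnn
    nlinarith [key1, hsq2, hxnn]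
  -- assemble
  have hsub : Finset.range (ℓ / 2 + 1) ⊆ Finset.range (ℓ + 1) :=
    Finset.range_subset_range.2 (by omega)
  have hstep : ∑ t ∈ Finset.range (ℓ / 2 + 1), (ℓ.choose t : ℝ) ≤ Sdelta δ ℓ m := by
    unfold Sdelta
    have heq : ∀ t ∈ Finset.range (ℓ / 2 + 1),
        (ℓ.choose t : ℝ) = (ℓ.choose t : ℝ) * min 1 ((m : ℝ) * δ^t * (1-δ)^(ℓ - t)) := by
      intro t htm
      simp only [Finset.mem_range] at htm
      rw [min_eq_left (key2 t (by omega)), mul_one]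
    rw [Finset.sum_congr rfl heq]
    refine Finset.sum_le_sum_of_subset_of_nonneg hsub ?_
    intro t _ _
    have hmin : 0 ≤ min 1 ((m : ℝ) * δ^t * (1-δ)^(ℓ - t)) :=
      le_min zero_le_one (by positivity)
    positivity
  calc (2 : ℝ)^(ℓ - 1) = ((2^(ℓ-1) : ℕ) : ℝ) := by push_cast; ring
    _ ≤ ((∑ t ∈ Finset.range (ℓ / 2 + 1), ℓ.choose t : ℕ) : ℝ) := by
        exact_mod_cast half_sum_choose ℓ hℓ
    _ = ∑ t ∈ Finset.range (ℓ / 2 + 1), (ℓ.choose t : ℝ) := by push_cast; rfl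
    _ ≤ Sdelta δ ℓ m := hstep
end

section
/- For any δ ∈ (0,1/2) and any δ' with δ < δ' < 1/2, S_δ(ℓ,m) ≤ 2^{ℓ·H(δ')} + m·2^{−ℓ·D(δ'||δ)}, where H(δ') is the binary entropy and D(δ'||δ) = δ'log₂(δ'/δ) + (1−δ')log₂((1−δ')/(1−δ)). -/
noncomputable def binEnt (p : ℝ) : ℝ :=
  p * Real.logb 2 (1/p) + (1 - p) * Real.logb 2 (1/(1-p))

noncomputable def klBer (p q : ℝ) : ℝ :=
  p * Real.logb 2 (p/q) + (1 - p) * Real.logb 2 ((1-p)/(1-q))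

lemma two_rpow_mul_logb (c x : ℝ) (hx : 0 < x) :
    (2:ℝ) ^ (c * Real.logb 2 x) = x ^ c := by
  rw [mul_comm, Real.rpow_mul (by norm_num), Real.rpow_logb (by norm_num) (by norm_num) hx]

lemma binom_sum_one (p : ℝ) (ℓ : ℕ) :
    ∑ t ∈ Finset.range (ℓ+1), (ℓ.choose t : ℝ) * (p^t * (1-p)^(ℓ-t)) = 1 := by
  calc ∑ t ∈ Finset.range (ℓ+1), (ℓ.choose t : ℝ) * (p^t * (1-p)^(ℓ-t))
      = ∑ t ∈ Finset.range (ℓ+1), p^t * (1-p)^(ℓ-t) * (ℓ.choose t : ℝ) := by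
        apply Finset.sum_congr rfl; intros; ring
    _ = (p + (1-p))^ℓ := (add_pow p (1-p) ℓ).symm
    _ = 1 := by norm_num

/-- Tilting inequality for real powers. -/
lemma tilt (a b f x y : ℝ) (ha0 : 0 < a) (hb0 : 0 < b) (hab : a ≤ b) (hf0 : 0 ≤ f) :
    a^(x+f) * b^(y-f) ≤ a^x * b^y := by
  rw [Real.rpow_add ha0, Real.rpow_sub hb0]
  have h1 : a^f ≤ b^f := Real.rpow_le_rpow ha0.le hab hf0
  have p1 : (0:ℝ) < a^x := Real.rpow_pos_of_pos ha0 x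
  have p2 : (0:ℝ) < b^y := Real.rpow_pos_of_pos hb0 y
  have p3 : (0:ℝ) < b^f := Real.rpow_pos_of_pos hb0 f
  calc a^x * a^f * (b^y / b^f)
      ≤ a^x * b^f * (b^y / b^f) := by
        have := mul_le_mul_of_nonneg_left h1 p1.le
        have h4 : (0:ℝ) ≤ b^y / b^f := by positivity
        exact mul_le_mul_of_nonneg_right this h4
    _ = a^x * b^y := by field_simp


theorem stmt_9 (δ δ' : ℝ) (hδ0 : 0 < δ) (hδδ' : δ < δ') (hδ' : δ' < 1/2)
    (ℓ m : ℕ) (hℓ : 0 < ℓ) (hm : 0 < m) :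
    Sdelta δ ℓ m ≤
      (2 : ℝ)^((ℓ : ℝ) * binEnt δ') + (m : ℝ) * (2 : ℝ)^(-((ℓ : ℝ) * klBer δ' δ)) := by
  have h2 : (0:ℝ) < 2 := two_pos
  have hδ'0 : 0 < δ' := lt_trans hδ0 hδδ'
  have h1δ' : 0 < 1 - δ' := by linarith
  have h1δ : 0 < 1 - δ := by linarith
  have hhalf : δ' ≤ 1 - δ' := by linarith
  have hL0 : (0:ℝ) < (ℓ:ℝ) := by exact_mod_cast hℓ
  set k : ℕ := Nat.floor (δ' * (ℓ:ℝ)) with hkdef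
  have hkle : (k:ℝ) ≤ δ' * (ℓ:ℝ) := Nat.floor_le (by positivity)
  have hklt : δ' * (ℓ:ℝ) < (k:ℝ) + 1 := Nat.lt_floor_add_one _
  have hkℓR : (k:ℝ) < (ℓ:ℝ) := lt_of_le_of_lt hkle (by nlinarith)
  have hkℓ : k < ℓ := by exact_mod_cast hkℓR
  -- expression for 2^(L * binEnt δ')
  have h2H : (2:ℝ)^((ℓ:ℝ) * binEnt δ') =
      δ' ^ (-((ℓ:ℝ)*δ')) * (1-δ') ^ (-((ℓ:ℝ)*(1-δ'))) := by
    have he : (ℓ:ℝ) * binEnt δ' =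
        ((ℓ:ℝ)*δ') * Real.logb 2 (1/δ') + ((ℓ:ℝ)*(1-δ')) * Real.logb 2 (1/(1-δ')) := by
      rw [binEnt]; ring
    rw [he, Real.rpow_add h2, two_rpow_mul_logb _ _ (by positivity),
        two_rpow_mul_logb _ _ (by positivity), one_div, one_div,
        Real.inv_rpow hδ'0.le, Real.inv_rpow h1δ'.le,
        ← Real.rpow_neg hδ'0.le, ← Real.rpow_neg h1δ'.le]
  -- expression for 2^(-(L * klBer δ' δ))
  have h2D : (2:ℝ)^(-((ℓ:ℝ) * klBer δ' δ)) =
      (δ/δ') ^ ((ℓ:ℝ)*δ') * ((1-δ)/(1-δ')) ^ ((ℓ:ℝ)*(1-δ')) := by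
    have he : -((ℓ:ℝ) * klBer δ' δ) =
        ((ℓ:ℝ)*δ') * Real.logb 2 (δ/δ') + ((ℓ:ℝ)*(1-δ')) * Real.logb 2 ((1-δ)/(1-δ')) := by
      rw [klBer, ← inv_div δ' δ, ← inv_div (1-δ') (1-δ), Real.logb_inv, Real.logb_inv]
      ring
    rw [he, Real.rpow_add h2, two_rpow_mul_logb _ _ (by positivity),
        two_rpow_mul_logb _ _ (by positivity)]
  -- Part A
  have partA : ∑ t ∈ Finset.Ico 0 (k+1), (ℓ.choose t : ℝ) ≤ (2:ℝ)^((ℓ:ℝ) * binEnt δ') := by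
    have hc : (0:ℝ) < δ'^k * (1-δ')^(ℓ-k) := by positivity
    have hA1 : (∑ t ∈ Finset.Ico 0 (k+1), (ℓ.choose t : ℝ)) * (δ'^k * (1-δ')^(ℓ-k)) ≤ 1 := by
      rw [Finset.sum_mul]
      have step : ∀ t ∈ Finset.Ico 0 (k+1),
          (ℓ.choose t : ℝ) * (δ'^k * (1-δ')^(ℓ-k)) ≤
          (ℓ.choose t : ℝ) * (δ'^t * (1-δ')^(ℓ-t)) := by
        intro t ht
        simp only [Finset.mem_Ico] at ht
        have htk : t ≤ k := Nat.lt_succ_iff.mp ht.2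
        have hpow : δ'^k * (1-δ')^(ℓ-k) ≤ δ'^t * (1-δ')^(ℓ-t) := by
          have e1 : δ'^k = δ'^t * δ'^(k-t) := by rw [← pow_add]; congr 1; omega
          have e2 : (1-δ')^(ℓ-t) = (1-δ')^(ℓ-k) * (1-δ')^(k-t) := by
            rw [← pow_add]; congr 1; omega
          have hmono : δ'^(k-t) ≤ (1-δ')^(k-t) := pow_le_pow_left₀ hδ'0.le hhalf _
          calc δ'^k * (1-δ')^(ℓ-k) = (δ'^t * (1-δ')^(ℓ-k)) * δ'^(k-t) := by rw [e1]; ring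
            _ ≤ (δ'^t * (1-δ')^(ℓ-k)) * (1-δ')^(k-t) :=
                mul_le_mul_of_nonneg_left hmono (by positivity)
            _ = δ'^t * (1-δ')^(ℓ-t) := by rw [e2]; ring
        exact mul_le_mul_of_nonneg_left hpow (by positivity)
      refine (Finset.sum_le_sum step).trans ?_
      refine le_trans ?_ (binom_sum_one δ' ℓ).le
      apply Finset.sum_le_sum_of_subset_of_nonneg
      · intro t ht
        simp only [Finset.mem_Ico, Finset.mem_range] at *
        omega
      · intro t _ _; positivity
    have hA2 : ∑ t ∈ Finset.Ico 0 (k+1), (ℓ.choose t : ℝ) ≤ 1 / (δ'^k * (1-δ')^(ℓ-k)) :=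
      (le_div_iff₀ hc).mpr hA1
    refine hA2.trans ?_
    rw [h2H]
    have hrw : δ'^k * (1-δ')^(ℓ-k) = δ'^((k:ℝ)) * (1-δ')^((ℓ:ℝ) - (k:ℝ)) := by
      rw [← Real.rpow_natCast δ' k, ← Real.rpow_natCast (1-δ') (ℓ-k)]
      congr 2
      rw [Nat.cast_sub hkℓ.le]
    have he0 : (0:ℝ) ≤ δ'*(ℓ:ℝ) - (k:ℝ) := by linarith
    have key : δ'^((ℓ:ℝ)*δ') * (1-δ')^((ℓ:ℝ)*(1-δ')) ≤
        δ'^((k:ℝ)) * (1-δ')^((ℓ:ℝ) - (k:ℝ)) := by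
      have e1 : (ℓ:ℝ)*δ' = (k:ℝ) + (δ'*(ℓ:ℝ) - (k:ℝ)) := by ring
      have e2 : (ℓ:ℝ)*(1-δ') = ((ℓ:ℝ) - (k:ℝ)) - (δ'*(ℓ:ℝ) - (k:ℝ)) := by ring
      rw [e1, e2]
      exact tilt δ' (1-δ') _ _ _ hδ'0 h1δ' hhalf he0
    have hpos : (0:ℝ) < δ'^((ℓ:ℝ)*δ') * (1-δ')^((ℓ:ℝ)*(1-δ')) := by positivity
    rw [hrw]
    calc 1 / (δ'^((k:ℝ)) * (1-δ')^((ℓ:ℝ) - (k:ℝ)))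
        ≤ 1 / (δ'^((ℓ:ℝ)*δ') * (1-δ')^((ℓ:ℝ)*(1-δ'))) :=
          one_div_le_one_div_of_le hpos key
      _ = δ' ^ (-((ℓ:ℝ)*δ')) * (1-δ') ^ (-((ℓ:ℝ)*(1-δ'))) := by
          rw [Real.rpow_neg hδ'0.le, Real.rpow_neg h1δ'.le, one_div, mul_inv]
  -- Part B
  have partB : ∑ t ∈ Finset.Ico (k+1) (ℓ+1), (ℓ.choose t : ℝ) * ((m:ℝ) * δ^t * (1-δ)^(ℓ-t))
      ≤ (m:ℝ) * (2:ℝ)^(-((ℓ:ℝ) * klBer δ' δ)) := by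
    rw [h2D]
    have ha0 : (0:ℝ) < δ/δ' := by positivity
    have hb0 : (0:ℝ) < (1-δ)/(1-δ') := by positivity
    have hab : δ/δ' ≤ (1-δ)/(1-δ') := by
      rw [div_le_div_iff₀ hδ'0 h1δ']
      nlinarith
    have hKd0 : (0:ℝ) < (δ/δ') ^ ((ℓ:ℝ)*δ') * ((1-δ)/(1-δ')) ^ ((ℓ:ℝ)*(1-δ')) := by positivity
    have tailB : ∑ t ∈ Finset.Ico (k+1) (ℓ+1), (ℓ.choose t : ℝ) * (δ^t * (1-δ)^(ℓ-t)) ≤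
        (δ/δ') ^ ((ℓ:ℝ)*δ') * ((1-δ)/(1-δ')) ^ ((ℓ:ℝ)*(1-δ')) := by
      have step : ∀ t ∈ Finset.Ico (k+1) (ℓ+1),
          (ℓ.choose t : ℝ) * (δ^t * (1-δ)^(ℓ-t)) ≤
          (ℓ.choose t : ℝ) * (δ'^t * (1-δ')^(ℓ-t)) *
            ((δ/δ') ^ ((ℓ:ℝ)*δ') * ((1-δ)/(1-δ')) ^ ((ℓ:ℝ)*(1-δ'))) := by
        intro t ht
        simp only [Finset.mem_Ico] at ht
        have htℓ : t ≤ ℓ := Nat.lt_succ_iff.mp ht.2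
        have htk : (k:ℝ) + 1 ≤ (t:ℝ) := by exact_mod_cast ht.1
        have e1 : (δ:ℝ)^t = δ'^t * (δ/δ')^t := by
          rw [← mul_pow]; congr 1; field_simp
        have e2 : (1-δ)^(ℓ-t) = (1-δ')^(ℓ-t) * ((1-δ)/(1-δ'))^(ℓ-t) := by
          rw [← mul_pow]; congr 1; field_simp
        have core : (δ/δ')^((t:ℝ)) * ((1-δ)/(1-δ'))^((ℓ:ℝ) - (t:ℝ)) ≤
            (δ/δ') ^ ((ℓ:ℝ)*δ') * ((1-δ)/(1-δ')) ^ ((ℓ:ℝ)*(1-δ')) := by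
          have hf0 : (0:ℝ) ≤ (t:ℝ) - (ℓ:ℝ)*δ' := by nlinarith
          have key := tilt (δ/δ') ((1-δ)/(1-δ')) ((t:ℝ) - (ℓ:ℝ)*δ')
            ((ℓ:ℝ)*δ') ((ℓ:ℝ)*(1-δ')) ha0 hb0 hab hf0
          rw [show (ℓ:ℝ)*δ' + ((t:ℝ) - (ℓ:ℝ)*δ') = (t:ℝ) by ring,
              show (ℓ:ℝ)*(1-δ') - ((t:ℝ) - (ℓ:ℝ)*δ') = (ℓ:ℝ) - (t:ℝ) by ring] at key
          exact key
        have hrw2 : (δ/δ')^t * ((1-δ)/(1-δ'))^(ℓ-t) =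
            (δ/δ')^((t:ℝ)) * ((1-δ)/(1-δ'))^((ℓ:ℝ) - (t:ℝ)) := by
          rw [← Real.rpow_natCast (δ/δ') t, ← Real.rpow_natCast ((1-δ)/(1-δ')) (ℓ-t)]
          congr 2
          rw [Nat.cast_sub htℓ]
        calc (ℓ.choose t : ℝ) * (δ^t * (1-δ)^(ℓ-t))
            = (ℓ.choose t : ℝ) * (δ'^t * (1-δ')^(ℓ-t)) *
                ((δ/δ')^t * ((1-δ)/(1-δ'))^(ℓ-t)) := by rw [e1, e2]; ring
          _ ≤ (ℓ.choose t : ℝ) * (δ'^t * (1-δ')^(ℓ-t)) *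
                ((δ/δ') ^ ((ℓ:ℝ)*δ') * ((1-δ)/(1-δ')) ^ ((ℓ:ℝ)*(1-δ'))) := by
              apply mul_le_mul_of_nonneg_left _ (by positivity)
              rw [hrw2]; exact core
      refine (Finset.sum_le_sum step).trans ?_
      rw [← Finset.sum_mul]
      have hsub : ∑ t ∈ Finset.Ico (k+1) (ℓ+1), (ℓ.choose t : ℝ) * (δ'^t * (1-δ')^(ℓ-t)) ≤ 1 := by
        refine le_trans ?_ (binom_sum_one δ' ℓ).le
        apply Finset.sum_le_sum_of_subset_of_nonneg
        · intro t ht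
          simp only [Finset.mem_Ico, Finset.mem_range] at *
          omega
        · intro t _ _; positivity
      calc (∑ t ∈ Finset.Ico (k+1) (ℓ+1), (ℓ.choose t : ℝ) * (δ'^t * (1-δ')^(ℓ-t))) *
              ((δ/δ') ^ ((ℓ:ℝ)*δ') * ((1-δ)/(1-δ')) ^ ((ℓ:ℝ)*(1-δ')))
          ≤ 1 * ((δ/δ') ^ ((ℓ:ℝ)*δ') * ((1-δ)/(1-δ')) ^ ((ℓ:ℝ)*(1-δ'))) :=
            mul_le_mul_of_nonneg_right hsub hKd0.le
        _ = (δ/δ') ^ ((ℓ:ℝ)*δ') * ((1-δ)/(1-δ')) ^ ((ℓ:ℝ)*(1-δ')) := one_mul _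
    calc ∑ t ∈ Finset.Ico (k+1) (ℓ+1), (ℓ.choose t : ℝ) * ((m:ℝ) * δ^t * (1-δ)^(ℓ-t))
        = (m:ℝ) * ∑ t ∈ Finset.Ico (k+1) (ℓ+1), (ℓ.choose t : ℝ) * (δ^t * (1-δ)^(ℓ-t)) := by
          rw [Finset.mul_sum]; apply Finset.sum_congr rfl; intros; ring
      _ ≤ (m:ℝ) * ((δ/δ') ^ ((ℓ:ℝ)*δ') * ((1-δ)/(1-δ')) ^ ((ℓ:ℝ)*(1-δ'))) :=
          mul_le_mul_of_nonneg_left tailB (by positivity)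
  -- combine
  have hsplit : Sdelta δ ℓ m =
      ∑ t ∈ Finset.Ico 0 (k+1), (ℓ.choose t : ℝ) * min 1 ((m:ℝ) * δ^t * (1-δ)^(ℓ-t)) +
      ∑ t ∈ Finset.Ico (k+1) (ℓ+1), (ℓ.choose t : ℝ) * min 1 ((m:ℝ) * δ^t * (1-δ)^(ℓ-t)) := by
    rw [Sdelta, Finset.range_eq_Ico,
        ← Finset.sum_Ico_consecutive _ (Nat.zero_le (k+1)) (by omega)]
  rw [hsplit]
  apply add_le_add
  · refine le_trans ?_ partA
    apply Finset.sum_le_sum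
    intro t _
    calc (ℓ.choose t : ℝ) * min 1 ((m:ℝ) * δ^t * (1-δ)^(ℓ-t))
        ≤ (ℓ.choose t : ℝ) * 1 :=
          mul_le_mul_of_nonneg_left (min_le_left _ _) (by positivity)
      _ = (ℓ.choose t : ℝ) := mul_one _
  · refine le_trans ?_ partB
    apply Finset.sum_le_sum
    intro t _
    exact mul_le_mul_of_nonneg_left (min_le_right _ _) (by positivity)
end
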